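/- Let μ > 2, T > 0, and let λ, b : [0,T) → (0,∞) be differentiable functions satisfying, for all t ∈ [0,T): |λ(t) λ'(t) + b(t)| ≤ b(t)/2 and λ(t)² |b'(t)| ≤ ((μ−2)/4) · b(t)². Then for every t ∈ [0,T): ∫₀^t λ(τ)^{−μ} dτ ≤ (4/(μ−2)) · 1/( b(t) · λ(t)^{μ−2} ). -/

import Mathlib

open MeasureTheory

/-- Refined integrability of `λ^{-μ}`, `μ > 2`, from the approximate modulation
dynamics `λλ' ≈ -b` and the smallness of `b'`. -/
theorem refined_integrability (μ T : ℝ) (hμ : 2 < μ) (hT : 0 < T)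
    (lam b lam' b' : ℝ → ℝ)
    (h : ∀ t ∈ Set.Ico (0 : ℝ) T,
      0 < lam t ∧ 0 < b t ∧
      HasDerivWithinAt lam (lam' t) (Set.Ico 0 T) t ∧
      HasDerivWithinAt b (b' t) (Set.Ico 0 T) t ∧
      |lam t * lam' t + b t| ≤ b t / 2 ∧
      (lam t) ^ 2 * |b' t| ≤ ((μ - 2) / 4) * (b t) ^ 2) :
    ∀ t ∈ Set.Ico (0 : ℝ) T,
      (∫ τ in (0:ℝ)..t, (lam τ) ^ (-μ))
        ≤ (4 / (μ - 2)) * (1 / (b t * (lam t) ^ (μ - 2))) := by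
  intro t ht
  obtain ⟨ht0, htT⟩ := ht
  set c : ℝ := 4 / (μ - 2) with hc_def
  have hμ2 : (0:ℝ) < μ - 2 := by linarith
  have hc : 0 < c := by positivity
  set G : ℝ → ℝ := fun τ => c * ((b τ)⁻¹ * lam τ ^ (2 - μ)) with hG_def
  set G' : ℝ → ℝ := fun τ =>
    c * (-(b' τ) / (b τ) ^ 2 * lam τ ^ (2 - μ)
      + (b τ)⁻¹ * ((2 - μ) * lam τ ^ (2 - μ - 1) * lam' τ)) with hG'_def
  have hsub : Set.Icc (0:ℝ) t ⊆ Set.Ico (0:ℝ) T := fun x hx =>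
    ⟨hx.1, lt_of_le_of_lt hx.2 htT⟩
  -- continuity of lam and b on Icc 0 t
  have hlam_cont : ContinuousOn lam (Set.Icc 0 t) := fun x hx =>
    ((h x (hsub hx)).2.2.1.continuousWithinAt).mono hsub
  have hb_cont : ContinuousOn b (Set.Icc 0 t) := fun x hx =>
    ((h x (hsub hx)).2.2.2.1.continuousWithinAt).mono hsub
  have hlam_ne : ∀ x ∈ Set.Icc (0:ℝ) t, lam x ≠ 0 := fun x hx =>
    (h x (hsub hx)).1.ne'
  have hb_ne : ∀ x ∈ Set.Icc (0:ℝ) t, b x ≠ 0 := fun x hx =>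
    (h x (hsub hx)).2.1.ne'
  -- continuity of G on Icc 0 t
  have hG_cont : ContinuousOn G (Set.Icc 0 t) := by
    apply continuousOn_const.mul
    exact (hb_cont.inv₀ hb_ne).mul
      (hlam_cont.rpow_const fun x hx => Or.inl (hlam_ne x hx))
  -- integrand is continuous, hence integrable
  have hφ_cont : ContinuousOn (fun τ => lam τ ^ (-μ)) (Set.Icc 0 t) :=
    hlam_cont.rpow_const fun x hx => Or.inl (hlam_ne x hx)
  have hφ_int : IntegrableOn (fun τ => lam τ ^ (-μ)) (Set.Icc 0 t) :=
    hφ_cont.integrableOn_Icc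
  -- derivative of G within Ioi x, for x ∈ Ioo 0 t
  have hG_deriv : ∀ x ∈ Set.Ioo (0:ℝ) t,
      HasDerivWithinAt G (G' x) (Set.Ioi x) x := by
    intro x hx
    have hxIco : x ∈ Set.Ico (0:ℝ) T := ⟨hx.1.le, hx.2.trans htT⟩
    obtain ⟨hL, hB, hlamd, hbd, _, _⟩ := h x hxIco
    have hinv : HasDerivWithinAt (fun τ => (b τ)⁻¹) (-(b' x) / (b x) ^ 2)
        (Set.Ico 0 T) x := hbd.inv hB.ne'
    have hrpow : HasDerivWithinAt (fun τ => lam τ ^ (2 - μ))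
        ((2 - μ) * lam x ^ (2 - μ - 1) * lam' x) (Set.Ico 0 T) x := by
      have := hlamd.rpow_const (p := 2 - μ) (Or.inl hL.ne')
      convert this using 1
      ring
    have hGIco : HasDerivWithinAt G (G' x) (Set.Ico 0 T) x := by
      simpa [hG'_def, mul_add] using (hinv.mul hrpow).const_mul c
    refine hGIco.mono_of_mem_nhdsWithin ?_
    have h1 : Set.Ioo x T ⊆ Set.Ico (0:ℝ) T := fun y hy =>
      ⟨(hx.1.trans hy.1).le, hy.2⟩
    have h2 : Set.Ioo x T ∈ nhdsWithin x (Set.Ioi x) :=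
      Ioo_mem_nhdsGT (hx.2.trans htT)
    exact Filter.mem_of_superset h2 h1
  -- pointwise lower bound on G'
  have hkey : ∀ x ∈ Set.Ioo (0:ℝ) t, lam x ^ (-μ) ≤ G' x := by
    intro x hx
    have hxIco : x ∈ Set.Ico (0:ℝ) T := ⟨hx.1.le, hx.2.trans htT⟩
    obtain ⟨hL, hB, _, _, hmod, hsmall⟩ := h x hxIco
    set L := lam x
    set B := b x
    set P := L ^ (-μ) with hP_def
    have hP : 0 < P := Real.rpow_pos_of_pos hL _
    have e1 : L ^ (2 - μ) = L ^ 2 * P := by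
      rw [show (2 - μ) = 2 + (-μ) by ring, Real.rpow_add hL, Real.rpow_two]
    have e2 : L ^ (2 - μ - 1) = L * P := by
      rw [show (2 - μ - 1) = 1 + (-μ) by ring, Real.rpow_add hL, Real.rpow_one]
    have hLL' : L * lam' x ≤ -B / 2 := by
      have := (abs_le.1 hmod).2; linarith
    have hB'bd : -((μ - 2) / 4) * B ^ 2 ≤ -(b' x) * L ^ 2 := by
      have h1 : b' x ≤ |b' x| := le_abs_self _
      nlinarith [sq_nonneg L]
    have hS : (μ - 2) / 4 ≤ -(b' x) * L ^ 2 / B ^ 2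
        + (2 - μ) * (L * lam' x) / B := by
      have hB2 : (0:ℝ) < B ^ 2 := by positivity
      have t1 : -((μ - 2) / 4) ≤ -(b' x) * L ^ 2 / B ^ 2 :=
        (le_div_iff₀ hB2).2 hB'bd
      have t2 : (μ - 2) / 2 ≤ (2 - μ) * (L * lam' x) / B := by
        rw [le_div_iff₀ hB]
        nlinarith [mul_le_mul_of_nonpos_left hLL' (by linarith : (2 - μ) ≤ 0)]
      linarith
    have heq : G' x = c * P * (-(b' x) * L ^ 2 / B ^ 2
        + (2 - μ) * (L * lam' x) / B) := by
      simp only [hG'_def]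
      rw [show lam x = L from rfl, show b x = B from rfl, e1, e2]
      field_simp
    calc lam x ^ (-μ) = c * P * ((μ - 2) / 4) := by
          rw [hc_def]; field_simp; rfl
      _ ≤ c * P * (-(b' x) * L ^ 2 / B ^ 2 + (2 - μ) * (L * lam' x) / B) := by
          apply mul_le_mul_of_nonneg_left hS (by positivity)
      _ = G' x := heq.symm
  -- apply FTC comparison
  have hFTC := intervalIntegral.integral_le_sub_of_hasDeriv_right_of_le ht0
    hG_cont hG_deriv hφ_int hkey
  obtain ⟨hL0, hB0, _, _, _, _⟩ := h 0 ⟨le_refl 0, hT⟩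
  have hG0 : 0 ≤ G 0 := by
    have : (0:ℝ) < lam 0 ^ (2 - μ) := Real.rpow_pos_of_pos hL0 _
    positivity
  obtain ⟨hLt, hBt, _, _, _, _⟩ := h t ⟨ht0, htT⟩
  have hGt : G t = 4 / (μ - 2) * (1 / (b t * lam t ^ (μ - 2))) := by
    have e : lam t ^ (2 - μ) = (lam t ^ (μ - 2))⁻¹ := by
      rw [show (2 - μ) = -(μ - 2) by ring, Real.rpow_neg hLt.le]
    rw [hG_def]
    simp only [e, mul_inv, one_div]
    rfl
  calc (∫ τ in (0:ℝ)..t, (lam τ) ^ (-μ)) ≤ G t - G 0 := hFTC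
    _ ≤ G t := by linarith
    _ = 4 / (μ - 2) * (1 / (b t * lam t ^ (μ - 2))) := hGt
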